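/- arXiv:1904.08449 — 4 statements merged into one kernel-verified Lean document; each statement's English description precedes it below -/
import Mathlib

section
/- Let f : ℝ^n → ℝ^n be a vector field, P : ℝ^n → ℝ^n a bijective linear map, and (ψ_i)_{i∈I} a family of Koopman eigenfunctions of f with eigenvalues λ_i ∈ ℂ such that, for each i, the composition x ↦ ψ_i(P x) is also a Koopman eigenfunction of f with the same eigenvalue λ_i. Assume the gradients of the family separate directions: for every y ∈ ℝ^n, the only vector w ∈ ℝ^n with Dψ_i(y)[w] = 0 for all i ∈ I is w = 0. Then f is symmetric with respect to P, i.e. f(P x) = P f(x) for all x ∈ ℝ^n. (Converse direction of the paper's Theorem 4.) -/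
/-- Converse direction of Theorem 4. If `P` is a bijective linear map and every
member of a family of Koopman eigenfunctions of `f` remains an eigenfunction with the same
eigenvalue after composition with `P`, and the gradients of the family separate directions,
then `f` is symmetric with respect to `P`. -/
theorem symmetry_of_koopman_eigenfunctions
    {n : ℕ} (f : (Fin n → ℝ) → (Fin n → ℝ))
    (P : (Fin n → ℝ) ≃ₗ[ℝ] (Fin n → ℝ))
    {I : Type*} (ψ : I → (Fin n → ℝ) → ℂ) (lam : I → ℂ)
    (hψ : ∀ i, Differentiable ℝ (ψ i))
    (heig : ∀ i x, fderiv ℝ (ψ i) x (f x) = lam i * ψ i x)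
    (heig' : ∀ i x, fderiv ℝ (fun y => ψ i (P y)) x (f x) = lam i * ψ i (P x))
    (hsep : ∀ y : Fin n → ℝ, ∀ w : Fin n → ℝ, (∀ i, fderiv ℝ (ψ i) y w = 0) → w = 0) :
    ∀ x, f (P x) = P (f x) := by
  intro x
  have key : ∀ i, fderiv ℝ (ψ i) (P x) (f (P x) - P (f x)) = 0 := by
    intro i
    have hP : HasFDerivAt (fun y : Fin n → ℝ => P y)
        (P.toLinearMap.toContinuousLinearMap) x :=
      (P.toLinearMap.toContinuousLinearMap).hasFDerivAt
    have hcomp : HasFDerivAt (fun y => ψ i (P y))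
        ((fderiv ℝ (ψ i) (P x)).comp P.toLinearMap.toContinuousLinearMap) x :=
      ((hψ i (P x)).hasFDerivAt).comp x hP
    have h1 : fderiv ℝ (fun y => ψ i (P y)) x (f x)
        = fderiv ℝ (ψ i) (P x) (P (f x)) := by
      rw [hcomp.fderiv]; rfl
    have h2 := heig' i x
    have h3 := heig i (P x)
    have : fderiv ℝ (ψ i) (P x) (P (f x)) = fderiv ℝ (ψ i) (P x) (f (P x)) := by
      rw [← h1, h2, h3]
    simp [map_sub, this]
  exact sub_eq_zero.mp (hsep (P x) _ key)
end

section
/- (Finite version of the paper's Lemma 7.) Let f : ℝ^n → ℝ^n be a vector field symmetric with respect to a linear map P : ℝ^n → ℝ^n with P^k = id for some k ≥ 2 and P ≠ id. Let (ψ_i)_{i∈I} be a finite, ℂ-linearly independent family of Koopman eigenfunctions of f with eigenvalues λ_i ∈ ℂ, giving a full-state Koopman mode decomposition with modes v_i ∈ ℂ^n, and assume each composed function x ↦ ψ_i(P x) lies in the ℂ-linear span of the family (ψ_j)_{j∈I}. Suppose further there is a measurement h = Σ_{i∈I} a_i·ψ_i with all coefficients a_i ≠ 0 such that h(P x) = h(x)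 for all x ∈ ℝ^n. Then the Koopman eigenvalues are not pairwise distinct: there exist indices i ≠ j in I with λ_i = λ_j (the Koopman spectrum has a repeated eigenvalue). -/
/-- finite version of the paper's Lemma 7: Let `f` be symmetric with respect
to a nontrivial linear map `P` with `P^k = id`, `k ≥ 2`.  Let `(ψ i)` be a finite,
`ℂ`-linearly independent family of Koopman eigenfunctions of `f` (eigenvalues `lam i`) giving
a full-state Koopman mode decomposition with modes `v i`, closed under composition with `P`
in the sense that each `x ↦ ψ i (P x)` lies in the span of the family.  If there is a
measurement `h = Σ a i • ψ i` with all `a i ≠ 0` that is `P`-invariant, then the Koopman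
eigenvalues are not pairwise distinct: some eigenvalue is repeated. -/
theorem symmetric_system_has_repeated_koopman_eigenvalue
    {n : ℕ} (f : (Fin n → ℝ) → (Fin n → ℝ))
    (P : (Fin n → ℝ) →ₗ[ℝ] (Fin n → ℝ))
    (k : ℕ) (hk : 2 ≤ k) (hPk : (⇑P)^[k] = id) (hPne : ⇑P ≠ id)
    (hsym : ∀ x, f (P x) = P (f x))
    {I : Type*} [Fintype I]
    (ψ : I → (Fin n → ℝ) → ℂ) (lam : I → ℂ) (v : I → (Fin n → ℂ))
    (hind : LinearIndependent ℂ ψ)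
    (hψ : ∀ i, Differentiable ℝ (ψ i))
    (heig : ∀ i x, fderiv ℝ (ψ i) x (f x) = lam i * ψ i x)
    (hdecomp : ∀ x : Fin n → ℝ, (fun j => (x j : ℂ)) = ∑ i, ψ i x • v i)
    (hclosed : ∀ i, (fun x => ψ i (P x)) ∈ Submodule.span ℂ (Set.range ψ))
    (a : I → ℂ) (ha : ∀ i, a i ≠ 0)
    (hinv : ∀ x, ∑ i, a i * ψ i (P x) = ∑ i, a i * ψ i x) :
    ∃ i j : I, i ≠ j ∧ lam i = lam j := by
  by_contra hcon
  push_neg at hcon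
  have hlam : ∀ i j : I, lam i = lam j → i = j := by
    intro i j hij
    by_contra hne
    exact hcon i j hne hij
  have hli : ∀ g : I → ℂ, ∑ j, g j • ψ j = 0 → ∀ j, g j = 0 :=
    Fintype.linearIndependent_iff.mp hind
  set Pc : (Fin n → ℝ) →L[ℝ] (Fin n → ℝ) := LinearMap.toContinuousLinearMap P with hPcdef
  have hPcoe : ∀ x, Pc x = P x := fun _ => rfl
  -- Step 1 : each ψ i ∘ P is a scalar multiple of ψ i
  have key : ∀ i, ∃ c : ℂ, ∀ x, ψ i (P x) = c * ψ i x := by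
    intro i
    obtain ⟨c, hc⟩ := (Submodule.mem_span_range_iff_exists_fun ℂ).mp (hclosed i)
    -- hc : ∑ j, c j • ψ j = fun x => ψ i (P x)
    have hcx : ∀ x, ψ i (P x) = ∑ j, c j * ψ j x := by
      intro x
      have := congrFun hc x
      simpa [Finset.sum_apply] using this.symm
    -- derivative of ψ i ∘ P at x applied to f x, two ways
    have hA : ∀ x : Fin n → ℝ,
        fderiv ℝ (fun y => ψ i (P y)) x (f x) = lam i * ψ i (P x) := by
      intro x
      have hcomp : fderiv ℝ ((ψ i) ∘ ⇑Pc) x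
          = (fderiv ℝ (ψ i) (Pc x)).comp (fderiv ℝ (⇑Pc) x) :=
        fderiv_comp (x := x) ((hψ i).differentiableAt) (Pc.differentiableAt)
      have hPder : fderiv ℝ (⇑Pc) x = Pc := Pc.fderiv
      have : fderiv ℝ (fun y => ψ i (P y)) x (f x)
          = fderiv ℝ (ψ i) (P x) (P (f x)) := by
        have := congrArg (fun (L : (Fin n → ℝ) →L[ℝ] ℂ) => L (f x)) hcomp
        simpa [Function.comp_def, hPder, hPcoe] using this
      rw [this, ← hsym, heig]
    have hB : ∀ x : Fin n → ℝ,
        fderiv ℝ (fun y => ψ i (P y)) x (f x) = ∑ j, c j * (lam j * ψ j x) := by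
      intro x
      have hfun : (fun y => ψ i (P y)) = fun y => ∑ j, c j • ψ j y := by
        funext y
        simpa [Finset.sum_apply] using (congrFun hc y).symm
      rw [hfun]
      have hder : fderiv ℝ (fun y => ∑ j, c j • ψ j y) x
          = ∑ j, c j • fderiv ℝ (ψ j) x := by
        rw [fderiv_fun_sum (A := fun j y => c j • ψ j y) (fun j _ => ((hψ j).differentiableAt).const_smul (c j))]
        congr 1
        funext j
        exact fderiv_fun_const_smul ((hψ j).differentiableAt) (c j)
      rw [hder]
      simp only [ContinuousLinearMap.sum_apply, ContinuousLinearMap.smul_apply, heig,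
        smul_eq_mul]
    -- combine
    have hzero : ∀ j, c j * lam j - lam i * c j = 0 := by
      apply hli
      funext x
      have h1 : ∑ j, c j * (lam j * ψ j x) = lam i * ∑ j, c j * ψ j x := by
        rw [← hB x, hA x, hcx x]
      have : ∑ j, (c j * lam j - lam i * c j) * ψ j x = 0 := by
        calc ∑ j, (c j * lam j - lam i * c j) * ψ j x
            = ∑ j, (c j * (lam j * ψ j x) - lam i * (c j * ψ j x)) := by
              apply Finset.sum_congr rfl; intro j _; ring
          _ = ∑ j, c j * (lam j * ψ j x) - ∑ j, lam i * (c j * ψ j x) :=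
              Finset.sum_sub_distrib _ _
          _ = ∑ j, c j * (lam j * ψ j x) - lam i * ∑ j, c j * ψ j x := by
              rw [Finset.mul_sum]
          _ = 0 := by rw [h1, sub_self]
      simpa [Finset.sum_apply, smul_eq_mul, Pi.zero_apply] using this
    refine ⟨c i, fun x => ?_⟩
    rw [hcx x]
    rw [Finset.sum_eq_single i]
    · intro j _ hji
      have hlne : lam j ≠ lam i := fun h => hji (hlam j i h)
      have := hzero j
      have hcj : c j = 0 := by
        have h := this
        have : c j * (lam j - lam i) = 0 := by ring_nf; linear_combination h
        rcases mul_eq_zero.mp this with h' | h'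
        · exact h'
        · exact absurd (sub_eq_zero.mp h') hlne
      simp [hcj]
    · intro h
      exact absurd (Finset.mem_univ i) h
  choose c hcval using key
  -- Step 2 : invariance forces c i = 1
  have hc1 : ∀ i, c i = 1 := by
    have hz : ∀ i, a i * c i - a i = 0 := by
      apply hli
      funext x
      have h1 : ∑ i, a i * (c i * ψ i x) = ∑ i, a i * ψ i x := by
        calc ∑ i, a i * (c i * ψ i x) = ∑ i, a i * ψ i (P x) := by
              apply Finset.sum_congr rfl; intro i _; rw [hcval i x]
          _ = ∑ i, a i * ψ i x := hinv x
      have : ∑ i, (a i * c i - a i) * ψ i x = 0 := by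
        calc ∑ i, (a i * c i - a i) * ψ i x
            = ∑ i, (a i * (c i * ψ i x) - a i * ψ i x) := by
              apply Finset.sum_congr rfl; intro i _; ring
          _ = ∑ i, a i * (c i * ψ i x) - ∑ i, a i * ψ i x := Finset.sum_sub_distrib _ _
          _ = 0 := by rw [h1, sub_self]
      simpa [Finset.sum_apply, smul_eq_mul, Pi.zero_apply] using this
    intro i
    have := hz i
    have h' : a i * (c i - 1) = 0 := by linear_combination this
    rcases mul_eq_zero.mp h' with h'' | h''
    · exact absurd h'' (ha i)
    · exact sub_eq_zero.mp h''
  -- hence ψ i ∘ P = ψ i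
  have hPsi : ∀ i x, ψ i (P x) = ψ i x := by
    intro i x
    rw [hcval i x, hc1 i, one_mul]
  -- Step 3 : full-state decomposition forces P = id
  apply hPne
  funext x
  have h1 := hdecomp (P x)
  have h2 := hdecomp x
  have : (fun j => ((P x) j : ℂ)) = (fun j => ((x : Fin n → ℝ) j : ℂ)) := by
    rw [h1, h2]
    apply Finset.sum_congr rfl
    intro i _
    rw [hPsi i x]
  funext j
  have := congrFun this j
  exact_mod_cast this
end

section
/- (Part (a) of the paper's Corollary 6.) Let P be a real n×n matrix with P^k = I for some k ≥ 1, also regarded as a complex matrix acting on ℂ^n. Let (ψ_i)_{i∈I} be a finite, ℂ-linearly independent family of functions ℝ^n → ℂ giving a full-state Koopman mode decomposition with modes v_i ∈ ℂ^n, and suppose every ψ_i has a rotational symmetry ψ_i(P x) = c_i·ψ_i(x) for all x ∈ ℝ^n, with c_i ∈ ℂ. Then each Koopman mode satisfies v_i = c_i·P^{k−1}·v_i. -/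
lemma complexify_mulVec {n : ℕ} (A : Matrix (Fin n) (Fin n) ℝ) (x : Fin n → ℝ) :
    (fun j => ((A.mulVec x) j : ℂ)) = (A.map Complex.ofReal).mulVec (fun j => (x j : ℂ)) := by
  funext j
  simp only [Matrix.mulVec, dotProduct, Matrix.map_apply]
  push_cast
  rfl

/-- part (a) of the paper's Corollary 6: Let `P` be a real `n×n` matrix with
`P^k = 1`, `k ≥ 1`, and let `(ψ i)` be a finite `ℂ`-linearly independent family giving a
full-state Koopman mode decomposition with modes `v i`, each `ψ i` having a rotational
symmetry `ψ i (P·x) = c i * ψ i x`.  Then each Koopman mode satisfies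
`v i = c i • P^{k-1} · v i` (with `P` regarded as a complex matrix). -/
theorem rotational_symmetry_koopman_mode
    {n : ℕ} (P : Matrix (Fin n) (Fin n) ℝ) (k : ℕ) (hk : 1 ≤ k) (hPk : P ^ k = 1)
    {I : Type*} [Fintype I]
    (ψ : I → (Fin n → ℝ) → ℂ) (v : I → (Fin n → ℂ))
    (hind : LinearIndependent ℂ ψ)
    (hdecomp : ∀ x : Fin n → ℝ, (fun j => (x j : ℂ)) = ∑ i, ψ i x • v i)
    (c : I → ℂ)
    (hrot : ∀ i, ∀ x, ψ i (P.mulVec x) = c i * ψ i x) :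
    ∀ i, v i = c i • ((P.map (Complex.ofReal)) ^ (k - 1)).mulVec (v i) := by
  set Pc := P.map (Complex.ofReal) with hPc
  set Q := Pc ^ (k - 1) with hQ
  have hmapQ : (P ^ (k-1)).map Complex.ofReal = Q := by
    rw [hQ, hPc]
    exact map_pow (Complex.ofRealHom.mapMatrix) P (k-1)
  -- key: for all x, ∑ i, ψ i x • (v i - c i • Q.mulVec (v i)) = 0
  have key : ∀ x : Fin n → ℝ, ∑ i, ψ i x • (v i - c i • Q.mulVec (v i)) = 0 := by
    intro x
    have h1 : ∑ i, ψ i x • (c i • Q.mulVec (v i)) = fun j => (x j : ℂ) := by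
      have h2 : ∑ i, ψ i x • (c i • Q.mulVec (v i))
          = Q.mulVec (∑ i, ψ i (P.mulVec x) • v i) := by
        rw [show Q.mulVec (∑ i, ψ i (P.mulVec x) • v i)
            = ∑ i, Q.mulVec (ψ i (P.mulVec x) • v i) from by
          simpa only [Matrix.mulVecLin_apply] using
            map_sum Q.mulVecLin (fun i => ψ i (P.mulVec x) • v i) Finset.univ]
        congr 1; funext i
        rw [hrot i x, Matrix.mulVec_smul, smul_smul, mul_comm (c i), ← smul_smul]
      rw [h2, ← hdecomp (P.mulVec x), complexify_mulVec, ← hPc,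
        Matrix.mulVec_mulVec, hQ, ← pow_succ]
      have : k - 1 + 1 = k := by omega
      have hpow : Pc ^ k = 1 := by
        have h : (Complex.ofRealHom.mapMatrix P) ^ k = 1 := by
          rw [← map_pow, hPk, map_one]
        exact h
      rw [this, hpow]
      simp
    calc ∑ i, ψ i x • (v i - c i • Q.mulVec (v i))
        = (∑ i, ψ i x • v i) - ∑ i, ψ i x • (c i • Q.mulVec (v i)) := by
          rw [← Finset.sum_sub_distrib]; congr 1; funext i; rw [smul_sub]
      _ = 0 := by rw [← hdecomp x, h1]; simp
  intro i
  have := (Fintype.linearIndependent_iff.mp hind)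
  have hz : ∀ j : Fin n, (v i - c i • Q.mulVec (v i)) j = 0 := by
    intro j
    have hsum : ∑ i', (v i' - c i' • Q.mulVec (v i')) j • ψ i' = 0 := by
      funext x
      have := congrFun (key x) j
      simpa [Finset.sum_apply, mul_comm] using this
    exact this _ hsum i
  have : v i - c i • Q.mulVec (v i) = 0 := funext hz
  have := sub_eq_zero.mp this
  exact this
end

section
/- (Part (b) of the paper's Corollary 6.) Let P be a real n×n matrix with P^k = I for some k ≥ 1, also regarded as a complex matrix acting on ℂ^n. Let (ψ_i)_{i∈I} be a finite, ℂ-linearly independent family of functions ℝ^n → ℂ giving a full-state Koopman mode decomposition with modes v_i ∈ ℂ^n. Suppose two distinguished indices r ≠ t form a reflectional pair, ψ_r(P x) = c_r·ψ_t(x) and ψ_t(P x) = c_t·ψ_r(x) for all x ∈ ℝ^n with c_r, c_t ∈ ℂ, while every other index j ∈ I \ {r, t} satisfies a rotational symmetry ψ_j(P x) = c_j·ψ_j(x). Then the Koopman modes of the reflectional pair satisfy v_t = c_r·P^{k−1}·v_r and v_r = c_t·P^{k−1}·v_t. -/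
/-- part (b) of the paper's Corollary 6: Let `P` be a real `n×n` matrix with
`P^k = 1`, `k ≥ 1`, and let `(ψ i)` be a finite `ℂ`-linearly independent family giving a
full-state Koopman mode decomposition with modes `v i`, where indices `r ≠ t` form a
reflectional pair (`ψ r (P·x) = c r * ψ t x`, `ψ t (P·x) = c t * ψ r x`) and every other
index has a rotational symmetry (`ψ j (P·x) = c j * ψ j x`).  Then the Koopman modes of the
reflectional pair satisfy `v t = c r • P^{k-1}·(v r)` and `v r = c t • P^{k-1}·(v t)` (with
`P` regarded as a complex matrix). -/
theorem reflectional_pair_koopman_modes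
    {n : ℕ} (P : Matrix (Fin n) (Fin n) ℝ) (k : ℕ) (hk : 1 ≤ k) (hPk : P ^ k = 1)
    {I : Type*} [Fintype I]
    (ψ : I → (Fin n → ℝ) → ℂ) (v : I → (Fin n → ℂ))
    (hind : LinearIndependent ℂ ψ)
    (hdecomp : ∀ x : Fin n → ℝ, (fun j => (x j : ℂ)) = ∑ i, ψ i x • v i)
    (r t : I) (hrt : r ≠ t)
    (c : I → ℂ)
    (hrefl₁ : ∀ x, ψ r (P.mulVec x) = c r * ψ t x)
    (hrefl₂ : ∀ x, ψ t (P.mulVec x) = c t * ψ r x)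
    (hrot : ∀ j, j ≠ r → j ≠ t → ∀ x, ψ j (P.mulVec x) = c j * ψ j x) :
    v t = c r • ((P.map (Complex.ofReal)) ^ (k - 1)).mulVec (v r) ∧
      v r = c t • ((P.map (Complex.ofReal)) ^ (k - 1)).mulVec (v t) := by
  classical
  set Q : Matrix (Fin n) (Fin n) ℂ := P.map (Complex.ofReal) with hQ
  set b : I → Fin n → ℂ :=
    fun i => if i = r then c t • v t else if i = t then c r • v r else c i • v i with hb
  have hcast : ∀ x : Fin n → ℝ,
      (fun j => ((P.mulVec x) j : ℂ)) = Q.mulVec (fun j => (x j : ℂ)) := by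
    intro x; funext m
    simp only [hQ, Matrix.mulVec, dotProduct, Matrix.map_apply]
    push_cast
    rfl
  have key : ∀ x : Fin n → ℝ, ∑ i, ψ i x • Q.mulVec (v i) = ∑ i, ψ i x • b i := by
    intro x
    have h1 : Q.mulVec (fun j => (x j : ℂ)) = ∑ i, ψ i x • Q.mulVec (v i) := by
      rw [hdecomp x, ← Q.mulVecLin_apply, map_sum]
      simp [Matrix.mulVecLin_apply]
    have h2 : (fun j => ((P.mulVec x) j : ℂ)) = ∑ i, ψ i x • b i := by
      rw [hdecomp (P.mulVec x)]
      refine Fintype.sum_equiv (Equiv.swap r t) _ _ ?_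
      intro i
      by_cases hir : i = r
      · subst hir
        rw [Equiv.swap_apply_left, hrefl₁ x]
        simp [hb, Ne.symm hrt, smul_smul, mul_comm]
      · by_cases hit : i = t
        · subst hit
          rw [Equiv.swap_apply_right, hrefl₂ x]
          simp [hb, smul_smul, mul_comm]
        · rw [Equiv.swap_apply_of_ne_of_ne hir hit, hrot i hir hit x]
          simp [hb, hir, hit, smul_smul, mul_comm]
    rw [← h1, ← hcast, h2]
  have coeff : ∀ i, Q.mulVec (v i) = b i := by
    intro i
    funext m
    have hzero : ∑ j, (Q.mulVec (v j) m - b j m) • ψ j = 0 := by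
      funext x
      have hx := congrFun (key x) m
      simp only [Finset.sum_apply, Pi.smul_apply, smul_eq_mul] at hx ⊢
      simp only [Pi.zero_apply, sub_mul]
      rw [Finset.sum_sub_distrib]
      rw [sub_eq_zero]
      calc ∑ j, (Q.mulVec (v j) m) * ψ j x = ∑ j, ψ j x * Q.mulVec (v j) m := by
            simp [mul_comm]
        _ = ∑ j, ψ j x * b j m := hx
        _ = ∑ j, b j m * ψ j x := by simp [mul_comm]
    have := Fintype.linearIndependent_iff.mp hind _ hzero i
    exact sub_eq_zero.mp this
  have hQr : Q.mulVec (v r) = c t • v t := by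
    have := coeff r
    simpa [hb] using this
  have hQt : Q.mulVec (v t) = c r • v r := by
    have := coeff t
    simpa [hb, if_neg (Ne.symm hrt)] using this
  have hQk : Q ^ k = 1 := by
    have : Q = Complex.ofRealHom.mapMatrix P := rfl
    rw [this, ← map_pow, hPk, map_one]
  have hpow : Q ^ (k - 1) * Q = Q ^ k := by
    rw [← pow_succ]
    congr 1
    omega
  constructor
  · have h := congrArg (fun M => Matrix.mulVec M (v t)) hQk
    simp only [Matrix.one_mulVec] at h
    rw [← h, ← hpow, ← Matrix.mulVec_mulVec, hQt, Matrix.mulVec_smul]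
  · have h := congrArg (fun M => Matrix.mulVec M (v r)) hQk
    simp only [Matrix.one_mulVec] at h
    rw [← h, ← hpow, ← Matrix.mulVec_mulVec, hQr, Matrix.mulVec_smul]
end
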